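/- In the symplectic setting, if a, b ∈ V satisfy B(a, b) = 0, then for every X ∈ gl(V)_B one has ⁅D_{a,b}, ⁅D_{a,b}, X⁆⁆ = 2·B(a, X b)·D_{a,b} − 2·B(X a, a)·D_b − 2·B(X b, b)·D_a. -/
import Mathlib


/-- The endomorphism `D_{a,b} : v ↦ B(v,b)·a + B(v,a)·b` of the symplectic setting. -/
def Dpair {k V : Type*} [Field k] [AddCommGroup V] [Module k V]
    (B : LinearMap.BilinForm k V) (a b : V) : Module.End k V :=
  (B.flip b).smulRight a + (B.flip a).smulRight b

/-- The endomorphism `D_a : v ↦ B(v,a)·a` of the symplectic setting. -/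
def Dsq {k V : Type*} [Field k] [AddCommGroup V] [Module k V]
    (B : LinearMap.BilinForm k V) (a : V) : Module.End k V :=
  (B.flip a).smulRight a

/-- In the symplectic setting, if `B(a,b) = 0` then for every `X ∈ gl(V)_B`:
`⁅D_{a,b}, ⁅D_{a,b}, X⁆⁆ = 2·B(a,Xb)·D_{a,b} − 2·B(Xa,a)·D_b − 2·B(Xb,b)·D_a`. -/
theorem stmt9 {k V : Type*} [Field k] [AddCommGroup V] [Module k V]
    (hchar : (2 : k) ≠ 0)
    (B : LinearMap.BilinForm k V) (halt : ∀ v : V, B v v = 0)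
    (a b : V) (hab : B a b = 0) :
    ∀ X : Module.End k V, (∀ u v : V, B u (X v) = B v (X u)) →
      ⁅Dpair B a b, ⁅Dpair B a b, X⁆⁆ =
        (2 * B a (X b)) • Dpair B a b - (2 * B (X a) a) • Dsq B b
          - (2 * B (X b) b) • Dsq B a := by
  intro X hX
  have hsk : ∀ u w : V, B u w = - B w u := fun u w => by
    have h := halt (u + w)
    simp only [map_add, LinearMap.add_apply, halt] at h
    linear_combination h
  have hba : B b a = 0 := by rw [hsk]; simp [hab]
  have hXba : B b (X a) = B a (X b) := (hX b a).symm ▸ rfl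
  ext v
  simp only [Ring.lie_def, Dpair, Dsq, LinearMap.sub_apply, Module.End.mul_apply,
    LinearMap.add_apply, LinearMap.smulRight_apply, LinearMap.smul_apply,
    map_add, map_smul, smul_eq_mul, map_sub]
  simp only [show ∀ u w : V, B.flip u w = B w u from fun _ _ => rfl]
  rw [show B (X a) b = - (B a (X b)) by rw [hsk, hX],
    show B (X a) a = - (B a (X a)) by rw [hsk],
    show B (X b) b = - (B b (X b)) by rw [hsk],
    show B (X b) a = - (B a (X b)) by rw [hsk, hX]]
  match_scalars
  · linear_combination (B (X v)) b * hab + (B (X v)) a * halt b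
  · linear_combination (B (X v)) b * halt a + (B (X v)) a * hba
  all_goals first
    | linear_combination (B v) b * hab + (B v) a * halt b
    | linear_combination (B v) b * halt a + (B v) a * hba
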